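/- Let h be a natural number, let U be a finite rooted tree, let v be a vertex of U of depth h, and let ℓ be any Boolean list of length h. Then 2^h · |{α ∈ Inj(U, M_h) : α(v) = ℓ}| = |Inj(U, M_h)|. -/

import Mathlib

attribute [local instance] Classical.propDecidable

/-- A finite rooted tree, encoded by a parent function together with a depth
function recording the graph distance to the root. -/
structure FiniteRootedTree where
  V : Type
  fintypeV : Fintype V
  root : V
  parent : V → V
  depth : V → ℕ
  depth_root : depth root = 0
  depth_parent : ∀ v, v ≠ root → depth v = depth (parent v) + 1
  root_of_depth_zero : ∀ v, depth v = 0 → v = root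

attribute [instance] FiniteRootedTree.fintypeV

namespace FiniteRootedTree

/-- `u` is a child of `v`. -/
def IsChild (T : FiniteRootedTree) (u v : T.V) : Prop :=
  u ≠ T.root ∧ T.parent u = v

/-- The number of children of `v`. -/
noncomputable def numChildren (T : FiniteRootedTree) (v : T.V) : ℕ :=
  Set.ncard {u : T.V | T.IsChild u v}

/-- A leaf is a vertex with no children. -/
def IsLeaf (T : FiniteRootedTree) (v : T.V) : Prop :=
  ∀ u, ¬ T.IsChild u v

/-- The finset of leaves of `T`. -/
noncomputable def leaves (T : FiniteRootedTree) : Finset T.V :=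
  Finset.univ.filter fun v => T.IsLeaf v

/-- Probability that the random root-to-leaf walk ends at the leaf `l`:
the product of `1 / c(v)` over the vertices `v ≠ l` on the root-to-`l` path
(equivalently, over the strict ancestors `parent^[k+1] l` of `l`). -/
noncomputable def leafProb (T : FiniteRootedTree) (l : T.V) : ℝ :=
  ∏ k ∈ Finset.range (T.depth l), (1 : ℝ) / (T.numChildren (T.parent^[k + 1] l))

/-- The expected length of the random root-to-leaf walk in `T`. -/
noncomputable def g (T : FiniteRootedTree) : ℝ :=
  ∑ l ∈ T.leaves, (T.depth l : ℝ) * T.leafProb l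

/-- The number of vertices of the subtree of `T` rooted at `v`, i.e. the number
of vertices `u` having `v` as an ancestor (including `v` itself). -/
noncomputable def subtreeSize (T : FiniteRootedTree) (v : T.V) : ℕ :=
  Set.ncard {u : T.V | ∃ k : ℕ, T.parent^[k] u = v}

end FiniteRootedTree

/-- The truncations of `T₁` and `T₂` at level `h` (the rooted trees induced on
the vertices of depth at most `h`) are isomorphic as rooted trees. -/
def TruncIso (T₁ T₂ : FiniteRootedTree) (h : ℕ) : Prop :=
  ∃ φ : {v : T₁.V // T₁.depth v ≤ h} ≃ {v : T₂.V // T₂.depth v ≤ h},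
    (φ ⟨T₁.root, by simp [T₁.depth_root]⟩).val = T₂.root ∧
    ∀ u u' : {v : T₁.V // T₁.depth v ≤ h},
      T₁.IsChild u'.val u.val ↔ T₂.IsChild (φ u').val (φ u).val

/-- `InjM h U` is the set of root-respecting injective homomorphisms from the
rooted tree `U` into the complete binary tree `M_h`, whose vertices are the
boolean lists of length at most `h`, rooted at the empty list, with the
children of a list being its two one-element extensions. -/
def InjM (h : ℕ) (U : FiniteRootedTree) : Set (U.V → List Bool) :=
  {α | Function.Injective α ∧ (∀ u, (α u).length ≤ h) ∧ α U.root = [] ∧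
    ∀ u u' : U.V, U.IsChild u' u → ∃ b : Bool, α u' = α u ++ [b]}

-- auxiliary lemmas
lemma list_xor_cancel_right : ∀ (l m : List Bool), l.length ≤ m.length →
    List.zipWith xor (List.zipWith xor l m) m = l := by
  intro l
  induction l with
  | nil => intro m _; simp
  | cons a l ih =>
    intro m hm
    cases m with
    | nil => simp at hm
    | cons c m =>
      simp only [List.zipWith_cons_cons]
      rw [ih m (by simpa using hm)]
      simp [Bool.xor_assoc]

lemma list_xor_cancel_left : ∀ (l l' : List Bool), l.length = l'.length →
    List.zipWith xor l (List.zipWith xor l l') = l' := by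
  intro l
  induction l with
  | nil => intro l' hl; simp [List.length_eq_zero_iff.1 hl.symm]
  | cons a l ih =>
    intro l' hl
    cases l' with
    | nil => simp at hl
    | cons a' l' =>
      simp only [List.zipWith_cons_cons]
      rw [ih l' (by simpa using hl)]
      simp [← Bool.xor_assoc]

lemma xor_append : ∀ (l m : List Bool) (b : Bool), l.length < m.length →
    List.zipWith xor (l ++ [b]) m =
      List.zipWith xor l m ++ [xor b (m.getD l.length false)] := by
  intro l
  induction l with
  | nil =>
    intro m b hm
    cases m with
    | nil => simp at hm
    | cons c m => simp
  | cons a l ih =>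
    intro m b hm
    cases m with
    | nil => simp at hm
    | cons c m => simp [ih m b (by simpa using hm)]

lemma len_eq_depth {h : ℕ} {U : FiniteRootedTree} {α : U.V → List Bool}
    (hα : α ∈ InjM h U) : ∀ u, (α u).length = U.depth u := by
  obtain ⟨hinj, hlen, hroot, hchild⟩ := hα
  suffices H : ∀ n u, U.depth u = n → (α u).length = n by
    intro u; exact H _ u rfl
  intro n
  induction n with
  | zero =>
    intro u hu
    rw [U.root_of_depth_zero u hu, hroot]; rfl
  | succ n ih =>
    intro u hu
    have hne : u ≠ U.root := by
      intro he; rw [he, U.depth_root] at hu; exact Nat.succ_ne_zero n hu.symm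
    have hdp : U.depth (U.parent u) = n := by
      have := U.depth_parent u hne
      omega
    obtain ⟨b, hb⟩ := hchild (U.parent u) u ⟨hne, rfl⟩
    rw [hb, List.length_append, ih _ hdp]
    simp

lemma ofn_exists : ∀ (l : List Bool) (n : ℕ), l.length = n →
    ∃ f : Fin n → Bool, List.ofFn f = l := by
  intro l n hl
  subst hl
  exact ⟨l.get, List.ofFn_get l⟩

/-- for a vertex `v` of depth `h` and a leaf `l` of `M_h`,
`2^h · |{α ∈ Inj(U, M_h) : α v = l}| = |Inj(U, M_h)|`. -/
theorem stmt_7 (h : ℕ) (U : FiniteRootedTree) (v : U.V) (hv : U.depth v = h)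
    (l : List Bool) (hl : l.length = h) :
    2 ^ h * Set.ncard {α ∈ InjM h U | α v = l} = (InjM h U).ncard := by
  classical
  -- finiteness of InjM
  have hfin : (InjM h U).Finite := by
    have hsub : (InjM h U) ⊆ Set.pi Set.univ
        (fun _ : U.V => {l : List Bool | l.length ≤ h}) := by
      intro α hα u _
      exact hα.2.1 u
    exact (Set.Finite.pi fun _ => List.finite_length_le Bool h).subset hsub
  -- fibers all have the same cardinality
  have key : ∀ l₁ l₂ : List Bool, l₁.length = h → l₂.length = h →
      {α ∈ InjM h U | α v = l₁}.ncard = {α ∈ InjM h U | α v = l₂}.ncard := by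
    intro l₁ l₂ h1 h2
    set m := List.zipWith xor l₁ l₂ with hm
    have hml : m.length = h := by
      simp [hm, List.length_zipWith, h1, h2]
    set T : (U.V → List Bool) → (U.V → List Bool) :=
      fun α u => List.zipWith xor (α u) m with hT
    have hmap : ∀ α ∈ InjM h U, T α ∈ InjM h U := by
      rintro α ⟨hinj, hlen, hroot, hchild⟩
      have hle : ∀ u, (α u).length ≤ m.length := fun u => by
        rw [hml]; exact hlen u
      refine ⟨?_, ?_, ?_, ?_⟩
      · intro u u' he
        apply hinj
        have := congrArg (fun s => List.zipWith xor s m) he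
        simpa [hT, list_xor_cancel_right _ _ (hle u), list_xor_cancel_right _ _ (hle u')] using this
      · intro u
        simp only [hT, List.length_zipWith]
        exact le_trans (min_le_left _ _) (hlen u)
      · simp [hT, hroot]
      · intro u u' hc
        obtain ⟨b, hb⟩ := hchild u u' hc
        have hdep : (α u).length = U.depth u :=
          len_eq_depth ⟨hinj, hlen, hroot, hchild⟩ u
        have hdep' : (α u').length = U.depth u' :=
          len_eq_depth ⟨hinj, hlen, hroot, hchild⟩ u'
        have hdu' : U.depth u' = U.depth u + 1 := by
          rw [U.depth_parent u' hc.1, hc.2]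
        have hlt : (α u).length < m.length := by
          rw [hml, hdep]
          have := hlen u'
          rw [hdep', hdu'] at this
          omega
        refine ⟨xor b (m.getD (α u).length false), ?_⟩
        simp only [hT, hb]
        exact xor_append _ _ _ hlt
    have hinv : ∀ α ∈ InjM h U, T (T α) = α := by
      intro α hα
      funext u
      exact list_xor_cancel_right _ _ (by rw [hml]; exact hα.2.1 u)
    have himg : {α ∈ InjM h U | α v = l₂} = T '' {α ∈ InjM h U | α v = l₁} := by
      ext β
      constructor
      · rintro ⟨hβ, hβv⟩
        refine ⟨T β, ⟨hmap β hβ, ?_⟩, hinv β hβ⟩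
        simp only [hT, hβv, hm]
        rw [List.zipWith_comm_of_comm (f := xor) (fun a b => Bool.xor_comm a b) (l := l₁) (l' := l₂)]
        exact list_xor_cancel_left l₂ l₁ (by rw [h1, h2])
      · rintro ⟨α, ⟨hα, hαv⟩, rfl⟩
        refine ⟨hmap α hα, ?_⟩
        simp only [hT, hαv, hm]
        exact list_xor_cancel_left l₁ l₂ (by rw [h1, h2])
    rw [himg, Set.ncard_image_of_injOn]
    intro α hα α' hα' he
    have := congrArg T he
    rwa [hinv α hα.1, hinv α' hα'.1] at this
  -- partition by the value at v
  set F := hfin.toFinset with hFdef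
  have hF : ∀ α, α ∈ F ↔ α ∈ InjM h U := fun α => hfin.mem_toFinset
  set t : Finset (List Bool) :=
    Finset.image List.ofFn (Finset.univ : Finset (Fin h → Bool)) with htdef
  have hmem_t : ∀ l' : List Bool, l'.length = h → l' ∈ t := by
    intro l' hl'
    obtain ⟨f, hf⟩ := ofn_exists l' h hl'
    exact Finset.mem_image.2 ⟨f, Finset.mem_univ f, hf⟩
  have hlen_t : ∀ l' ∈ t, l'.length = h := by
    intro l' hl'
    obtain ⟨f, _, rfl⟩ := Finset.mem_image.1 hl'
    simp
  have hcard_t : t.card = 2 ^ h := by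
    rw [htdef, Finset.card_image_of_injective _ List.ofFn_injective]
    simp
  have hpart : F.card = ∑ b ∈ t, (F.filter fun α => α v = b).card := by
    apply Finset.card_eq_sum_card_fiberwise
    intro α hα
    apply hmem_t
    rw [len_eq_depth ((hF α).1 hα) v, hv]
  have hfib : ∀ b ∈ t, (F.filter fun α => α v = b).card
      = {α ∈ InjM h U | α v = l}.ncard := by
    intro b hb
    rw [← key b l (hlen_t b hb) hl, ← Set.ncard_coe_finset]
    congr 1
    ext α
    simp [hF α, Set.mem_setOf_eq, and_comm]
  have hIcard : (InjM h U).ncard = F.card := Set.ncard_eq_toFinset_card _ hfin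
  rw [hIcard, hpart, Finset.sum_congr rfl hfib, Finset.sum_const, hcard_t, smul_eq_mul]
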